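/- Let X be a random variable with E[X] = 0, E[X²] < ∞, satisfying the distributional fixed point equation X =_d Σ_{k=1}^b V_k X^{(k)} + C(𝓥), where X^{(1)},…,X^{(b)} are i.i.d. copies of X independent of 𝓥 = (V₁,…,V_b), and C(𝓥) = 1 + μ^{-1}Σ_{i=1}^b V_i ln V_i. Then Var(X) = (μ^{-2}·E[(Σ_{i=1}^b V_i ln V_i)²] − 1) / (1 − Σ_{i=1}^b E[V_i²]), provided Σ_{i=1}^b E[V_i²] < 1. -/

import Mathlib

open MeasureTheory ProbabilityTheory
open scoped ENNReal

/-- Codomain family for the joint family `(𝓥, X⁽¹⁾, …, X⁽ᵇ⁾)`. -/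
def obeta (b : ℕ) : Option (Fin b) → Type
  | none => Fin b → ℝ
  | some _ => ℝ

noncomputable instance (b : ℕ) (o : Option (Fin b)) : MeasurableSpace (obeta b o) := by
  cases o <;> unfold obeta <;> infer_instance

/-- The joint family: `none ↦ 𝓥` and `some k ↦ X⁽ᵏ⁾`. -/
def ofam {Ω : Type*} {b : ℕ} (Vv : Fin b → Ω → ℝ) (Xs : Fin b → Ω → ℝ) :
    (o : Option (Fin b)) → Ω → obeta b o
  | none => fun ω i => Vv i ω
  | some k => fun ω => Xs k ω

lemma abs_mul_log_le_one {v : ℝ} (h0 : 0 ≤ v) (h1 : v ≤ 1) : |v * Real.log v| ≤ 1 := by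
  rcases h0.eq_or_lt with rfl | hv
  · simp
  · have hlog : Real.log v ≤ 0 := Real.log_nonpos h0 h1
    have h2 : Real.log v⁻¹ ≤ v⁻¹ - 1 := Real.log_le_sub_one_of_pos (inv_pos.2 hv)
    rw [Real.log_inv] at h2
    have h3 : v * v⁻¹ = 1 := mul_inv_cancel₀ hv.ne'
    rw [abs_of_nonpos (mul_nonpos_of_nonneg_of_nonpos h0 hlog)]
    nlinarith [mul_le_mul_of_nonneg_left h2 h0]

/-- Variance of the solution of the path-length fixed point equation:
if `X =_d ∑ₖ Vₖ X⁽ᵏ⁾ + C(𝓥)` with `X⁽ᵏ⁾` i.i.d. copies of `X` independent of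
`𝓥 = (V₁,…,V_b)`, `E[X] = 0`, `E[X²] < ∞`, then
`Var(X) = (μ⁻²·E[(∑ᵢ Vᵢ ln Vᵢ)²] − 1)/(1 − ∑ᵢ E[Vᵢ²])`. -/
theorem stmt5
    {Ω : Type*} [MeasurableSpace Ω] (P : Measure Ω) [IsProbabilityMeasure P]
    (b : ℕ) (hb : 2 ≤ b)
    (X : Ω → ℝ) (Xs : Fin b → Ω → ℝ) (Vv : Fin b → Ω → ℝ)
    (hXmeas : Measurable X) (hXsmeas : ∀ k, Measurable (Xs k))
    (hVmeas : ∀ i, Measurable (Vv i))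
    (hnonneg : ∀ᵐ ω ∂P, ∀ i, 0 ≤ Vv i ω) (hsum : ∀ᵐ ω ∂P, ∑ i, Vv i ω = 1)
    -- the copies `X⁽ᵏ⁾` and the split vector `𝓥` are (jointly) independent
    (hindep : iIndepFun (ofam Vv Xs) P)
    (hcopies : ∀ k, IdentDistrib (Xs k) X P P)
    (μ : ℝ) (hμ : μ = ∫ ω, -(∑ i, Vv i ω * Real.log (Vv i ω)) ∂P) (hμpos : 0 < μ)
    (hmean : ∫ ω, X ω ∂P = 0)
    (hX2 : Integrable (fun ω => (X ω) ^ 2) P)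
    (hE2 : Integrable (fun ω => (∑ i, Vv i ω * Real.log (Vv i ω)) ^ 2) P)
    (hV2 : ∑ i, ∫ ω, (Vv i ω) ^ 2 ∂P < 1)
    -- the distributional fixed point equation
    (hfix : P.map X = P.map (fun ω =>
      (∑ k, Vv k ω * Xs k ω) + (1 + μ⁻¹ * ∑ i, Vv i ω * Real.log (Vv i ω)))) :
    ∫ ω, (X ω) ^ 2 ∂P =
      (μ⁻¹ ^ 2 * ∫ ω, (∑ i, Vv i ω * Real.log (Vv i ω)) ^ 2 ∂P - 1) /
        (1 - ∑ i, ∫ ω, (Vv i ω) ^ 2 ∂P) := by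
  classical
  -- basic integrability of X and copies
  have hXint : Integrable X P :=
    ((memLp_two_iff_integrable_sq hXmeas.aestronglyMeasurable).2 hX2).integrable (by norm_num)
  have hXsint : ∀ k, Integrable (Xs k) P := fun k => (hcopies k).integrable_iff.2 hXint
  have hXs0 : ∀ k, ∫ ω, Xs k ω ∂P = 0 := fun k => by
    rw [(hcopies k).integral_eq, hmean]
  have hXs2 : ∀ k, Integrable (fun ω => Xs k ω ^ 2) P := fun k =>
    (((hcopies k).comp (measurable_id.pow_const 2)).integrable_iff).2 hX2
  have hXs2eq : ∀ k, ∫ ω, Xs k ω ^ 2 ∂P = ∫ ω, X ω ^ 2 ∂P := fun k =>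
    ((hcopies k).comp (measurable_id.pow_const 2)).integral_eq
  -- measurability
  have hLmeas : Measurable (fun ω => ∑ i, Vv i ω * Real.log (Vv i ω)) :=
    Finset.measurable_sum _ fun i _ => (hVmeas i).mul (Real.measurable_log.comp (hVmeas i))
  have hCmeas : Measurable (fun ω => 1 + μ⁻¹ * ∑ i, Vv i ω * Real.log (Vv i ω)) :=
    measurable_const.add (measurable_const.mul hLmeas)
  have hSmeas : Measurable (fun ω => ∑ k, Vv k ω * Xs k ω) :=
    Finset.measurable_sum _ fun k _ => (hVmeas k).mul (hXsmeas k)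
  -- a.e. bounds
  have hVle1 : ∀ᵐ ω ∂P, ∀ i, Vv i ω ≤ 1 := by
    filter_upwards [hnonneg, hsum] with ω h0 h1
    intro i
    calc Vv i ω ≤ ∑ j, Vv j ω := Finset.single_le_sum (fun j _ => h0 j) (Finset.mem_univ i)
      _ = 1 := h1
  have hLbd : ∀ᵐ ω ∂P, |∑ i, Vv i ω * Real.log (Vv i ω)| ≤ b := by
    filter_upwards [hnonneg, hVle1] with ω h0 h1
    calc |∑ i, Vv i ω * Real.log (Vv i ω)| ≤ ∑ i, |Vv i ω * Real.log (Vv i ω)| :=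
          Finset.abs_sum_le_sum_abs _ _
      _ ≤ ∑ _i : Fin b, (1 : ℝ) := Finset.sum_le_sum fun i _ => abs_mul_log_le_one (h0 i) (h1 i)
      _ = b := by simp
  have hLint : Integrable (fun ω => ∑ i, Vv i ω * Real.log (Vv i ω)) P :=
    Integrable.mono' (integrable_const (b : ℝ)) hLmeas.aestronglyMeasurable
      (by filter_upwards [hLbd] with ω h; simpa [Real.norm_eq_abs] using h)
  have hLavg : ∫ ω, (∑ i, Vv i ω * Real.log (Vv i ω)) ∂P = -μ := by
    rw [hμ, integral_neg]; ring
  have hμinv : (0 : ℝ) ≤ μ⁻¹ := le_of_lt (inv_pos.2 hμpos)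
  have hCbd : ∀ᵐ ω ∂P, ‖1 + μ⁻¹ * ∑ i, Vv i ω * Real.log (Vv i ω)‖ ≤ 1 + μ⁻¹ * b := by
    filter_upwards [hLbd] with ω h
    rw [Real.norm_eq_abs]
    calc |1 + μ⁻¹ * ∑ i, Vv i ω * Real.log (Vv i ω)|
        ≤ |1| + |μ⁻¹ * ∑ i, Vv i ω * Real.log (Vv i ω)| := abs_add_le _ _
      _ = 1 + |μ⁻¹| * |∑ i, Vv i ω * Real.log (Vv i ω)| := by rw [abs_one, abs_mul]
      _ ≤ 1 + μ⁻¹ * b := by rw [abs_of_nonneg hμinv]; gcongr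
  -- independence of 𝓥 and the vector of copies
  have hofam_meas : ∀ o, Measurable (ofam Vv Xs o) := by
    rintro (_ | k)
    · exact measurable_pi_lambda _ fun i => hVmeas i
    · exact hXsmeas k
  have hdisj : Disjoint ({none} : Finset (Option (Fin b))) (Finset.univ.image some) := by
    simp [Finset.disjoint_left]
  have hbase := hindep.indepFun_finset {none} (Finset.univ.image some) hdisj hofam_meas
  have hnmem : (none : Option (Fin b)) ∈ ({none} : Finset (Option (Fin b))) :=
    Finset.mem_singleton_self _
  have hsmem : ∀ k : Fin b, (some k : Option (Fin b)) ∈ Finset.univ.image some := fun k =>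
    Finset.mem_image_of_mem _ (Finset.mem_univ k)
  have hφ : Measurable
      (fun p : (∀ i : ({none} : Finset (Option (Fin b))), obeta b i) =>
        p ⟨none, hnmem⟩ : _ → (Fin b → ℝ)) := measurable_pi_apply _
  have hψ : Measurable
      (fun (p : ∀ i : (Finset.univ.image some : Finset (Option (Fin b))), obeta b i)
        (k : Fin b) => (p ⟨some k, hsmem k⟩ : ℝ)) :=
    measurable_pi_lambda _ fun k => measurable_pi_apply _
  have hVX : IndepFun (fun ω (i : Fin b) => Vv i ω) (fun ω (k : Fin b) => Xs k ω) P :=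
    hbase.comp hφ hψ
  have hVvecmeas : Measurable (fun ω (i : Fin b) => Vv i ω) :=
    measurable_pi_lambda _ fun i => hVmeas i
  have hXvecmeas : Measurable (fun ω (k : Fin b) => Xs k ω) :=
    measurable_pi_lambda _ fun k => hXsmeas k
  -- generic factorization lemma
  have hterm : ∀ (F G : (Fin b → ℝ) → ℝ), Measurable F → Measurable G →
      ∫ ω, F (fun i => Vv i ω) * G (fun k => Xs k ω) ∂P =
        (∫ ω, F (fun i => Vv i ω) ∂P) * ∫ ω, G (fun k => Xs k ω) ∂P := by
    intro F G hF hG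
    exact (hVX.comp hF hG).integral_fun_mul_eq_mul_integral (hF.comp hVvecmeas).aestronglyMeasurable
      (hG.comp hXvecmeas).aestronglyMeasurable
  -- pairwise independence and its consequences
  have hXXne : ∀ k l : Fin b, k ≠ l → IndepFun (Xs k) (Xs l) P := fun k l hkl =>
    hindep.indepFun (show (some k : Option (Fin b)) ≠ some l by simpa using hkl)
  have hXX0 : ∀ k l : Fin b, k ≠ l → ∫ ω, Xs k ω * Xs l ω ∂P = 0 := by
    intro k l hkl
    rw [(hXXne k l hkl).integral_fun_mul_eq_mul_integral (hXsint k).1 (hXsint l).1, hXs0, hXs0, mul_zero]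
  -- the cross terms : integrals
  have hT : ∀ k l : Fin b, ∫ ω, (Vv k ω * Vv l ω) * (Xs k ω * Xs l ω) ∂P
      = (∫ ω, Vv k ω * Vv l ω ∂P) * ∫ ω, Xs k ω * Xs l ω ∂P := fun k l =>
    hterm (fun v => v k * v l) (fun x => x k * x l)
      ((measurable_pi_apply k).mul (measurable_pi_apply l))
      ((measurable_pi_apply k).mul (measurable_pi_apply l))
  -- the cross terms : integrability
  have hTint : ∀ k l : Fin b, Integrable (fun ω => (Vv k ω * Vv l ω) * (Xs k ω * Xs l ω)) P := by
    intro k l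
    have hXkl : Integrable (fun ω => Xs k ω * Xs l ω) P := by
      rcases eq_or_ne k l with rfl | hkl
      · simpa [pow_two] using hXs2 k
      · exact (hXXne k l hkl).integrable_mul (hXsint k) (hXsint l)
    refine Integrable.mono' hXkl.abs
      (((hVmeas k).mul (hVmeas l)).mul ((hXsmeas k).mul (hXsmeas l))).aestronglyMeasurable ?_
    filter_upwards [hnonneg, hVle1] with ω h0 h1
    have hk : |Vv k ω| ≤ 1 := abs_le.2 ⟨by linarith [h0 k], h1 k⟩
    have hl : |Vv l ω| ≤ 1 := abs_le.2 ⟨by linarith [h0 l], h1 l⟩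
    rw [Real.norm_eq_abs, abs_mul, abs_mul]
    calc |Vv k ω| * |Vv l ω| * |Xs k ω * Xs l ω| ≤ 1 * |Xs k ω * Xs l ω| :=
          mul_le_mul_of_nonneg_right (mul_le_one₀ hk (abs_nonneg _) hl) (abs_nonneg _)
      _ = |Xs k ω * Xs l ω| := one_mul _
  -- SC-type terms
  have hUint : ∀ k : Fin b, Integrable
      (fun ω => (Vv k ω * (1 + μ⁻¹ * ∑ i, Vv i ω * Real.log (Vv i ω))) * Xs k ω) P := by
    intro k
    refine Integrable.mono' (((hXsint k).abs.const_mul (1 + μ⁻¹ * b)))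
      (((hVmeas k).mul hCmeas).mul (hXsmeas k)).aestronglyMeasurable ?_
    filter_upwards [hnonneg, hVle1, hCbd] with ω h0 h1 hC
    have hk : |Vv k ω| ≤ 1 := abs_le.2 ⟨by linarith [h0 k], h1 k⟩
    rw [Real.norm_eq_abs, abs_mul, abs_mul]
    have hM : (0:ℝ) ≤ 1 + μ⁻¹ * b := by positivity
    rw [Real.norm_eq_abs] at hC
    calc |Vv k ω| * |1 + μ⁻¹ * ∑ i, Vv i ω * Real.log (Vv i ω)| * |Xs k ω|
        ≤ 1 * (1 + μ⁻¹ * b) * |Xs k ω| :=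
          mul_le_mul_of_nonneg_right (mul_le_mul hk hC (abs_nonneg _) zero_le_one) (abs_nonneg _)
      _ = (1 + μ⁻¹ * ↑b) * |Xs k ω| := by rw [one_mul]
  have hU0 : ∀ k : Fin b,
      ∫ ω, (Vv k ω * (1 + μ⁻¹ * ∑ i, Vv i ω * Real.log (Vv i ω))) * Xs k ω ∂P = 0 := by
    intro k
    have hF : Measurable (fun v : Fin b → ℝ =>
        v k * (1 + μ⁻¹ * ∑ i, v i * Real.log (v i))) :=
      (measurable_pi_apply k).mul (measurable_const.add (measurable_const.mul
        (Finset.measurable_sum _ fun i _ =>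
          (measurable_pi_apply i).mul (Real.measurable_log.comp (measurable_pi_apply i)))))
    have h := hterm (fun v => v k * (1 + μ⁻¹ * ∑ i, v i * Real.log (v i)))
      (fun x => x k) hF (measurable_pi_apply k)
    simp only at h
    rw [h, hXs0 k, mul_zero]
  -- the C² term
  have hC2int : Integrable
      (fun ω => (1 + μ⁻¹ * ∑ i, Vv i ω * Real.log (Vv i ω)) ^ 2) P := by
    refine Integrable.mono' (integrable_const ((1 + μ⁻¹ * b) ^ 2))
      (hCmeas.pow_const 2).aestronglyMeasurable ?_
    filter_upwards [hCbd] with ω h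
    rw [Real.norm_eq_abs, abs_pow]
    rw [Real.norm_eq_abs] at h
    exact pow_le_pow_left₀ (abs_nonneg _) h 2
  have hC2 : ∫ ω, (1 + μ⁻¹ * ∑ i, Vv i ω * Real.log (Vv i ω)) ^ 2 ∂P
      = μ⁻¹ ^ 2 * (∫ ω, (∑ i, Vv i ω * Real.log (Vv i ω)) ^ 2 ∂P) - 1 := by
    have e1 : (fun ω => (1 + μ⁻¹ * ∑ i, Vv i ω * Real.log (Vv i ω)) ^ 2)
        = fun ω => 1 + ((2 * μ⁻¹) * (∑ i, Vv i ω * Real.log (Vv i ω))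
            + μ⁻¹ ^ 2 * (∑ i, Vv i ω * Real.log (Vv i ω)) ^ 2) := funext fun ω => by ring
    rw [show (∫ ω, (1 + μ⁻¹ * ∑ i, Vv i ω * Real.log (Vv i ω)) ^ 2 ∂P)
        = ∫ ω, 1 + ((2 * μ⁻¹) * (∑ i, Vv i ω * Real.log (Vv i ω))
            + μ⁻¹ ^ 2 * (∑ i, Vv i ω * Real.log (Vv i ω)) ^ 2) ∂P from by rw [e1]]
    have hI2 : Integrable (fun ω => (2 * μ⁻¹) * (∑ i, Vv i ω * Real.log (Vv i ω))
        + μ⁻¹ ^ 2 * (∑ i, Vv i ω * Real.log (Vv i ω)) ^ 2) P :=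
      (hLint.const_mul (2 * μ⁻¹)).add (hE2.const_mul (μ⁻¹ ^ 2))
    rw [integral_add (integrable_const 1) hI2,
      integral_add (hLint.const_mul (2 * μ⁻¹)) (hE2.const_mul (μ⁻¹ ^ 2)),
      integral_const_mul, integral_const_mul, hLavg]
    simp only [integral_const, measure_univ, probReal_univ, ENNReal.toReal_one, smul_eq_mul, one_mul]
    linear_combination (-2 : ℝ) * mul_inv_cancel₀ (ne_of_gt hμpos)
  -- step 1 : transfer via the fixed point equation
  have hsqmeas : Measurable fun x : ℝ => x ^ 2 := measurable_id.pow_const 2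
  have h0 : ∫ ω, X ω ^ 2 ∂P = ∫ ω, ((∑ k, Vv k ω * Xs k ω)
      + (1 + μ⁻¹ * ∑ i, Vv i ω * Real.log (Vv i ω))) ^ 2 ∂P := by
    have hA : ∫ x, x ^ 2 ∂(P.map X) = ∫ ω, X ω ^ 2 ∂P :=
      integral_map hXmeas.aemeasurable hsqmeas.aestronglyMeasurable
    have hB : ∫ x, x ^ 2 ∂(P.map (fun ω => (∑ k, Vv k ω * Xs k ω)
        + (1 + μ⁻¹ * ∑ i, Vv i ω * Real.log (Vv i ω))))
        = ∫ ω, ((∑ k, Vv k ω * Xs k ω)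
          + (1 + μ⁻¹ * ∑ i, Vv i ω * Real.log (Vv i ω))) ^ 2 ∂P :=
      integral_map (hSmeas.add hCmeas).aemeasurable hsqmeas.aestronglyMeasurable
    rw [← hA, hfix, hB]
  -- pointwise expansion of the square
  have hexp : ∀ ω, ((∑ k, Vv k ω * Xs k ω)
      + (1 + μ⁻¹ * ∑ i, Vv i ω * Real.log (Vv i ω))) ^ 2
      = (∑ k, ∑ l, (Vv k ω * Vv l ω) * (Xs k ω * Xs l ω))
        + ((∑ k, 2 * ((Vv k ω * (1 + μ⁻¹ * ∑ i, Vv i ω * Real.log (Vv i ω))) * Xs k ω))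
          + (1 + μ⁻¹ * ∑ i, Vv i ω * Real.log (Vv i ω)) ^ 2) := by
    intro ω
    have h1 : (∑ k, Vv k ω * Xs k ω) ^ 2
        = ∑ k, ∑ l, (Vv k ω * Vv l ω) * (Xs k ω * Xs l ω) := by
      rw [sq, Finset.sum_mul_sum]
      exact Finset.sum_congr rfl fun k _ => Finset.sum_congr rfl fun l _ => by ring
    have h2 : 2 * (∑ k, Vv k ω * Xs k ω) * (1 + μ⁻¹ * ∑ i, Vv i ω * Real.log (Vv i ω))
        = ∑ k, 2 * ((Vv k ω * (1 + μ⁻¹ * ∑ i, Vv i ω * Real.log (Vv i ω))) * Xs k ω) := by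
      rw [Finset.mul_sum, Finset.sum_mul]
      exact Finset.sum_congr rfl fun k _ => by ring
    rw [add_sq, h1, h2, add_assoc]
  -- integrate the expansion
  have hAint : Integrable (fun ω => ∑ k, ∑ l, (Vv k ω * Vv l ω) * (Xs k ω * Xs l ω)) P :=
    integrable_finset_sum _ fun k _ => integrable_finset_sum _ fun l _ => hTint k l
  have hBint : Integrable (fun ω => ∑ k, 2 *
      ((Vv k ω * (1 + μ⁻¹ * ∑ i, Vv i ω * Real.log (Vv i ω))) * Xs k ω)) P :=
    integrable_finset_sum _ fun k _ => (hUint k).const_mul 2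
  have hmain : ∫ ω, ((∑ k, Vv k ω * Xs k ω)
      + (1 + μ⁻¹ * ∑ i, Vv i ω * Real.log (Vv i ω))) ^ 2 ∂P
      = (∑ i, ∫ ω, (Vv i ω) ^ 2 ∂P) * (∫ ω, X ω ^ 2 ∂P)
        + (μ⁻¹ ^ 2 * (∫ ω, (∑ i, Vv i ω * Real.log (Vv i ω)) ^ 2 ∂P) - 1) := by
    rw [show (fun ω => ((∑ k, Vv k ω * Xs k ω)
      + (1 + μ⁻¹ * ∑ i, Vv i ω * Real.log (Vv i ω))) ^ 2)
      = fun ω => (∑ k, ∑ l, (Vv k ω * Vv l ω) * (Xs k ω * Xs l ω))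
        + ((∑ k, 2 * ((Vv k ω * (1 + μ⁻¹ * ∑ i, Vv i ω * Real.log (Vv i ω))) * Xs k ω))
          + (1 + μ⁻¹ * ∑ i, Vv i ω * Real.log (Vv i ω)) ^ 2) from funext hexp]
    have hBC : Integrable (fun ω =>
        (∑ k, 2 * ((Vv k ω * (1 + μ⁻¹ * ∑ i, Vv i ω * Real.log (Vv i ω))) * Xs k ω))
          + (1 + μ⁻¹ * ∑ i, Vv i ω * Real.log (Vv i ω)) ^ 2) P := hBint.add hC2int
    rw [integral_add hAint hBC, integral_add hBint hC2int]
    have hA : ∫ ω, (∑ k, ∑ l, (Vv k ω * Vv l ω) * (Xs k ω * Xs l ω)) ∂P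
        = (∑ i, ∫ ω, (Vv i ω) ^ 2 ∂P) * (∫ ω, X ω ^ 2 ∂P) := by
      rw [integral_finset_sum _ fun k _ => integrable_finset_sum _ fun l _ => hTint k l]
      rw [Finset.sum_mul]
      refine Finset.sum_congr rfl fun k _ => ?_
      rw [integral_finset_sum _ fun l _ => hTint k l]
      rw [Finset.sum_eq_single_of_mem k (Finset.mem_univ k)
        (fun l _ hlk => by rw [hT k l, hXX0 k l (Ne.symm hlk), mul_zero])]
      rw [hT k k]
      congr 1
      · exact integral_congr_ae (Filter.Eventually.of_forall fun ω => (pow_two (Vv k ω)).symm)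
      · rw [← hXs2eq k]
        exact integral_congr_ae (Filter.Eventually.of_forall fun ω => (pow_two (Xs k ω)).symm)
    have hB : ∫ ω, (∑ k, 2 *
        ((Vv k ω * (1 + μ⁻¹ * ∑ i, Vv i ω * Real.log (Vv i ω))) * Xs k ω)) ∂P = 0 := by
      rw [integral_finset_sum _ fun k _ => (hUint k).const_mul 2]
      refine Finset.sum_eq_zero fun k _ => ?_
      rw [integral_const_mul, hU0 k, mul_zero]
    rw [hA, hB, hC2]
    ring
  -- finish by algebra
  have hne : (1 : ℝ) - ∑ i, ∫ ω, (Vv i ω) ^ 2 ∂P ≠ 0 := by linarith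
  rw [eq_div_iff hne]
  have := h0
  rw [hmain] at this
  linear_combination this
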